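/- Let Λ be an A-lattice in a finite-dimensional normed K_∞-vector space V. The successive minima are canonical: ||ω_i|| = min{ r ∈ ℝ : the closed ball B_r(0) ∩ Λ contains i linearly independent vectors over K_∞ }. In particular the numbers ||ω_1|| ≤ … ≤ ||ω_d|| do not depend on the choices in the greedy construction. -/

import Mathlib

open Filter
open scoped Classical

/-- The absolute value `|f| = σ^(ord f)` on the Laurent series field `K∞ = k((π))`,
`π = 1/T`; for a polynomial `f` in `T` this is `σ^(-deg f)`. -/
noncomputable def absLS (k : Type*) [Field k] (σ : ℝ) (f : LaurentSeries k) : ℝ :=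
  if f = 0 then 0 else σ ^ f.order

/-- The embedding of `A = k[T]` into `K∞ = k((π))`, sending `T` to `π⁻¹`. -/
noncomputable def polyToLS (k : Type*) [Field k] : Polynomial k →ₐ[k] LaurentSeries k :=
  Polynomial.aeval (HahnSeries.single (1 : ℤ) (1 : k))⁻¹

/-- The `A`-lattice spanned by the vectors `b i`: all `A`-linear combinations of the `b i`. -/
def latticeA (k : Type*) [Field k] {V : Type*} [AddCommGroup V]
    [Module (LaurentSeries k) V] {d : ℕ} (b : Fin d → V) : Set V :=
  {x | ∃ a : Fin d → Polynomial k, x = ∑ i, polyToLS k (a i) • b i}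

/-- A family indexed by `Fin n` such that each vector is not in the span of the previous
ones is linearly independent. -/
lemma li_of_not_mem_span_earlier {K V : Type*} [Field K] [AddCommGroup V] [Module K V] :
    ∀ (n : ℕ) (v : Fin n → V),
      (∀ m, v m ∉ Submodule.span K (v '' {j | j < m})) → LinearIndependent K v := by
  intro n
  induction n with
  | zero => intro v _; exact linearIndependent_empty_type
  | succ n ih =>
    intro v hv
    rw [← Fin.snoc_init_self v]
    refine linearIndependent_fin_snoc.2 ⟨ih (Fin.init v) ?_, ?_⟩
    · intro m hm
      refine hv m.castSucc (Submodule.span_mono ?_ hm)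
      rintro x ⟨j, hj, rfl⟩
      exact ⟨j.castSucc, by simpa using hj, rfl⟩
    · have h : Set.range (Fin.init v) ⊆ v '' {j | j < Fin.last n} := by
        rintro x ⟨j, rfl⟩
        exact ⟨j.castSucc, Fin.castSucc_lt_last j, rfl⟩
      exact fun hmem => hv (Fin.last n) (Submodule.span_mono h hmem)

/-- The successive minima are canonical: `N (ω i)` is the least `r` such that the closed ball
of radius `r` contains `i + 1` linearly independent lattice vectors; in particular the numbers
`N (ω 0) ≤ … ≤ N (ω (d-1))` are independent of the choices in the greedy construction. -/
theorem stmt16 {k V : Type*} [Field k] [AddCommGroup V] [Module (LaurentSeries k) V]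
    (σ : ℝ) (hσ0 : 0 < σ) (hσ1 : σ < 1)
    (N : V → ℝ)
    (hN0 : ∀ x : V, N x = 0 ↔ x = 0)
    (hNsmul : ∀ (c : LaurentSeries k) (x : V), N (c • x) = absLS k σ c * N x)
    (hNadd : ∀ x y : V, N (x + y) ≤ max (N x) (N y))
    {d : ℕ}
    (b : Module.Basis (Fin d) (LaurentSeries k) V)
    (ω : Fin d → V)
    (hωmem : ∀ i, ω i ∈ latticeA k b)
    (hωnot : ∀ i, ω i ∉ Submodule.span (LaurentSeries k) (ω '' {j : Fin d | j < i}))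
    (hωmin : ∀ i, ∀ x ∈ latticeA k b,
      x ∉ Submodule.span (LaurentSeries k) (ω '' {j : Fin d | j < i}) → N (ω i) ≤ N x) :
    ∀ i : Fin d, IsLeast {r : ℝ | ∃ u : Fin (i.1 + 1) → V,
      (∀ j, u j ∈ latticeA k b ∧ N (u j) ≤ r) ∧
      LinearIndependent (LaurentSeries k) u} (N (ω i)) := by
  intro i
  have hi : i.1 + 1 ≤ d := i.2
  constructor
  · -- membership: take u j = ω (castLE j)
    refine ⟨fun j => ω (Fin.castLE hi j), fun j => ⟨hωmem _, ?_⟩, ?_⟩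
    · -- N (ω (castLE j)) ≤ N (ω i)
      refine hωmin (Fin.castLE hi j) (ω i) (hωmem i) fun hmem => hωnot i ?_
      refine Submodule.span_mono ?_ hmem
      rintro x ⟨l, hl, rfl⟩
      refine ⟨l, ?_, rfl⟩
      have hji : (j : ℕ) ≤ i.1 := Nat.lt_succ_iff.1 j.isLt
      exact lt_of_lt_of_le hl (show Fin.castLE hi j ≤ i from Fin.le_def.2 hji)
    · refine li_of_not_mem_span_earlier _ _ fun m hmem => hωnot (Fin.castLE hi m) ?_
      refine Submodule.span_mono ?_ hmem
      rintro x ⟨j, hj, rfl⟩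
      exact ⟨Fin.castLE hi j, Fin.lt_def.2 (Fin.lt_def.1 hj), rfl⟩
  · -- lower bound
    rintro r ⟨u, hu, hli⟩
    by_contra hr
    push_neg at hr
    have hmem : ∀ j, u j ∈ Submodule.span (LaurentSeries k)
        (ω '' {l : Fin d | l < i}) := by
      intro j
      by_contra h
      exact absurd ((hωmin i (u j) (hu j).1 h).trans (hu j).2) (not_le.2 hr)
    have hw : ω '' {l : Fin d | l < i} = ↑((Finset.Iio i).image ω) := by
      rw [Finset.coe_image, Finset.coe_Iio]
      rfl
    have hcard := linearIndependent_le_span' u hli ((Finset.Iio i).image ω : Finset V)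
      (by rintro x ⟨j, rfl⟩; rw [← hw]; exact hmem j)
    simp only [Cardinal.mk_fintype, Fintype.card_fin, Set.Finite.card_toFinset,
      Nat.cast_le] at hcard
    rw [show (Fintype.card ↑(↑((Finset.Iio i).image ω) : Set V))
        = ((Finset.Iio i).image ω).card from by simp] at hcard
    have : ((Finset.Iio i).image ω).card ≤ i.1 := by
      simpa [Fin.card_Iio] using Finset.card_image_le (s := Finset.Iio i) (f := ω)
    have := (Nat.cast_le.1 hcard).trans this
    omega
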